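/- Let f : ℝⁿ → ℝ ∪ {+∞} be lower semicontinuous, C ⊂ ℝⁿ closed and convex, and x̄ ∈ C a local minimizer of f over C. Then either there exists v ∈ ∂f(x̄) (limiting subdifferential) with 0 ∈ v + N(C, x̄), or there exists v^∞ ∈ ∂^∞f(x̄) (horizon subdifferential) with ‖v^∞‖ = 1 and 0 ∈ v^∞ + N(C, x̄). -/

import Mathlib

open RealInnerProductSpace Set Filter Topology

variable {E : Type*} [NormedAddCommGroup E] [InnerProductSpace ℝ E]

/-- The regular (Fréchet) subdifferential of `f` at `x`. -/
def frechetSubdiff (f : E → EReal) (x : E) : Set E :=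
  {v | ∀ ε > (0:ℝ), ∀ᶠ y in nhds x,
    f x + ((⟪v, y - x⟫ - ε * ‖y - x‖ : ℝ) : EReal) ≤ f y}

/-- The limiting (Mordukhovich) subdifferential of `f` at `x`. -/
def limitingSubdiff (f : E → EReal) (x : E) : Set E :=
  {v | ∃ (xs vs : ℕ → E),
    Tendsto xs atTop (nhds x) ∧
    Tendsto (fun k => f (xs k)) atTop (nhds (f x)) ∧
    Tendsto vs atTop (nhds v) ∧
    ∀ k, vs k ∈ frechetSubdiff f (xs k)}

/-- The horizon subdifferential of `f` at `x`. -/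
def horizonSubdiff (f : E → EReal) (x : E) : Set E :=
  {v | ∃ (xs vs : ℕ → E) (ts : ℕ → ℝ),
    Tendsto xs atTop (nhds x) ∧
    Tendsto (fun k => f (xs k)) atTop (nhds (f x)) ∧
    (∀ k, vs k ∈ frechetSubdiff f (xs k)) ∧
    (∀ k, 0 < ts k) ∧ Tendsto ts atTop (nhds 0) ∧
    Tendsto (fun k => ts k • vs k) atTop (nhds v)}

section Aux
variable {α : Type*} [TopologicalSpace α]

lemma lsc_add_cont {f : α → EReal} {g : α → ℝ} (hf : LowerSemicontinuous f)
    (hg : Continuous g) : LowerSemicontinuous fun x => f x + ((g x : ℝ) : EReal) :=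
  hf.add' (continuous_coe_real_ereal.comp hg).lowerSemicontinuous fun _ =>
    EReal.continuousAt_add (Or.inr (by simp)) (Or.inr (by simp))

lemma lsc_exists_min [FirstCountableTopology α] {s : Set α} (hs : IsCompact s)
    (hne : s.Nonempty) {f : α → EReal} (hf : LowerSemicontinuous f) :
    ∃ z ∈ s, ∀ y ∈ s, f z ≤ f y := by
  obtain ⟨u, -, hu, humem⟩ := exists_seq_tendsto_sInf (hne.image f) (OrderBot.bddBelow _)
  choose x hxs hxu using humem
  obtain ⟨z, hzs, φ, hφ, hzx⟩ := hs.tendsto_subseq hxs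
  refine ⟨z, hzs, fun y hy => ?_⟩
  have h1 : sInf (f '' s) ≤ f y := csInf_le (OrderBot.bddBelow _) (mem_image_of_mem f hy)
  refine le_trans ?_ h1
  by_contra h
  push_neg at h
  obtain ⟨b, hb1, hb2⟩ := exists_between h
  have hev : ∀ᶠ n in atTop, b < f (x (φ n)) := hzx.eventually (hf z b hb2)
  have hev2 : ∀ᶠ n in atTop, u (φ n) < b :=
    (hu.comp hφ.tendsto_atTop).eventually_lt_const hb1
  obtain ⟨n, h1', h2'⟩ := (hev.and hev2).exists
  rw [hxu (φ n)] at h1'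
  exact absurd (h1'.trans h2') (lt_irrefl b)
end Aux

set_option maxHeartbeats 2000000 in
theorem fritz_john_via_normal_cone
    [FiniteDimensional ℝ E]
    (f : E → EReal) (hproper : ∀ x, f x ≠ ⊥) (hlsc : LowerSemicontinuous f)
    (C : Set E) (hCclosed : IsClosed C) (hCconv : Convex ℝ C)
    (xb : E) (hxbC : xb ∈ C) (hdom : f xb ≠ ⊤)
    (hmin : ∃ U ∈ nhds xb, ∀ y ∈ C ∩ U, f xb ≤ f y) :
    (∃ v ∈ limitingSubdiff f xb, ∀ y ∈ C, ⟪-v, y - xb⟫ ≤ 0) ∨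
    (∃ v ∈ horizonSubdiff f xb, ‖v‖ = 1 ∧ ∀ y ∈ C, ⟪-v, y - xb⟫ ≤ 0) := by
  classical
  obtain ⟨U, hU, hUmin⟩ := hmin
  obtain ⟨r, hr0, hrU⟩ := Metric.nhds_basis_closedBall.mem_iff.mp hU
  set B := Metric.closedBall xb r with hBdef
  have hBcomp : IsCompact B := isCompact_closedBall xb r
  have hxbB : xb ∈ B := Metric.mem_closedBall_self hr0.le
  set D : E → ℝ := fun y => Metric.infDist y C with hDdef
  have hDcont : Continuous D := Metric.continuous_infDist_pt C
  have hDnonneg : ∀ y, 0 ≤ D y := fun y => Metric.infDist_nonneg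
  have hDxb : D xb = 0 := Metric.infDist_zero_of_mem hxbC
  set g : ℕ → E → ℝ := fun k y => ((k:ℝ)+1)/2 * (D y)^2 + ‖y - xb‖^2 with hgdef
  have hgcont : ∀ k, Continuous (g k) := fun k =>
    (continuous_const.mul (hDcont.pow 2)).add
      (((continuous_id.sub continuous_const).norm).pow 2)
  have hgnonneg : ∀ k y, 0 ≤ g k y := fun k y => by positivity
  have hgxb : ∀ k, g k xb = 0 := fun k => by simp [hgdef, hDxb]
  set φ : ℕ → E → EReal := fun k y => f y + ((g k y : ℝ) : EReal) with hφdef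
  have hφlsc : ∀ k, LowerSemicontinuous (φ k) := fun k => lsc_add_cont hlsc (hgcont k)
  have hmin' : ∀ k, ∃ z ∈ B, ∀ y ∈ B, φ k z ≤ φ k y := fun k =>
    lsc_exists_min hBcomp ⟨xb, hxbB⟩ (hφlsc k)
  choose x hxB hxmin using hmin'
  set fb := (f xb).toReal with hfbdef
  have hfbcoe : (fb : EReal) = f xb := EReal.coe_toReal hdom (hproper xb)
  obtain ⟨z, hzB, hzmin⟩ := lsc_exists_min hBcomp ⟨xb, hxbB⟩ hlsc
  obtain ⟨m, hm⟩ : ∃ m : ℝ, ∀ y ∈ B, (m : EReal) ≤ f y := by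
    refine ⟨(f z).toReal, fun y hy => le_trans ?_ (hzmin y hy)⟩
    by_cases hz : f z = ⊤
    · simp [hz]
    · exact (EReal.coe_toReal hz (hproper z)).le
  have hkey : ∀ k, f (x k) + ((g k (x k) : ℝ) : EReal) ≤ f xb := fun k => by
    have h := hxmin k xb hxbB
    simp only [hφdef, hgxb k, EReal.coe_zero, add_zero] at h
    exact h
  have hfxk_le : ∀ k, f (x k) ≤ (fb : EReal) := fun k => by
    rw [hfbcoe]
    refine le_trans ?_ (hkey k)
    exact le_add_of_nonneg_right (by exact_mod_cast hgnonneg k (x k))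
  have hfxk_ne_top : ∀ k, f (x k) ≠ ⊤ :=
    fun k => ((hfxk_le k).trans_lt (EReal.coe_lt_top fb)).ne
  set F : ℕ → ℝ := fun k => (f (x k)).toReal with hFdef
  have hFcoe : ∀ k, (F k : EReal) = f (x k) := fun k =>
    EReal.coe_toReal (hfxk_ne_top k) (hproper _)
  have hkeyR : ∀ k, F k + g k (x k) ≤ fb := fun k => by
    have h := hkey k
    rw [← hFcoe k, ← hfbcoe, ← EReal.coe_add, EReal.coe_le_coe_iff] at h
    exact h
  have hFle : ∀ k, F k ≤ fb := fun k => by nlinarith [hgnonneg k (x k), hkeyR k]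
  have hFge : ∀ k, m ≤ F k := fun k => by
    have h := hm (x k) (hxB k)
    rw [← hFcoe k, EReal.coe_le_coe_iff] at h
    exact h
  have hnormle : ∀ k, F k + ‖x k - xb‖^2 ≤ fb := fun k => by
    have h := hkeyR k
    have : ((k:ℝ)+1)/2 * (D (x k))^2 ≥ 0 := by positivity
    simp only [hgdef] at h
    linarith
  have hd2 : ∀ k, D (x k)^2 ≤ 2*(fb - m) / ((k:ℝ)+1) := fun k => by
    have h1 := hkeyR k
    have h2 := hFge k
    have h3 : 0 ≤ ‖x k - xb‖^2 := sq_nonneg _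
    have hk1 : (0:ℝ) < (k:ℝ)+1 := by positivity
    rw [le_div_iff₀ hk1]
    simp only [hgdef] at h1
    nlinarith
  have hDx0 : Tendsto (fun k => D (x k)) atTop (𝓝 0) := by
    have hnn : ∀ k : ℕ, 0 ≤ 2*(fb-m) / ((k:ℝ)+1) := fun k => le_trans (sq_nonneg _) (hd2 k)
    have hb : ∀ k, D (x k) ≤ Real.sqrt (2*(fb-m) / ((k:ℝ)+1)) := fun k => by
      have h1 := hd2 k
      have h2 := hDnonneg (x k)
      nlinarith [Real.sq_sqrt (hnn k), Real.sqrt_nonneg (2*(fb-m)/((k:ℝ)+1))]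
    have hdiv : Tendsto (fun k : ℕ => 2*(fb-m) / ((k:ℝ)+1)) atTop (𝓝 0) := by
      apply Tendsto.div_atTop (tendsto_const_nhds)
      exact tendsto_atTop_add_const_right _ 1 tendsto_natCast_atTop_atTop
    have hs : Tendsto (fun k : ℕ => Real.sqrt (2*(fb-m)/((k:ℝ)+1))) atTop (𝓝 0) := by
      rw [show (0:ℝ) = Real.sqrt 0 by simp]
      exact (Real.continuous_sqrt.tendsto 0).comp hdiv
    exact squeeze_zero (fun k => hDnonneg (x k)) hb hs
  -- convergence of the minimizers to xb
  have hxto : Tendsto x atTop (𝓝 xb) := by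
    apply tendsto_of_subseq_tendsto
    intro ns hns
    obtain ⟨x', hx'B, τ, hτ, hxτ⟩ := hBcomp.tendsto_subseq (fun n => hxB (ns n))
    refine ⟨τ, ?_⟩
    suffices hx'eq : x' = xb by
      rw [← hx'eq]; exact hxτ
    set κ : ℕ → ℕ := fun j => ns (τ j) with hκdef
    have hκto : Tendsto κ atTop atTop := hns.comp hτ.tendsto_atTop
    have hxκ : Tendsto (fun j => x (κ j)) atTop (𝓝 x') := hxτ
    have hDx' : D x' = 0 := by
      have h1 : Tendsto (fun j => D (x (κ j))) atTop (𝓝 (D x')) :=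
        (hDcont.tendsto x').comp hxκ
      have h2 : Tendsto (fun j => D (x (κ j))) atTop (𝓝 0) := hDx0.comp hκto
      exact tendsto_nhds_unique h1 h2
    have hx'C : x' ∈ C := (hCclosed.mem_iff_infDist_zero ⟨xb, hxbC⟩).2 hDx'
    have hx'U : x' ∈ U := hrU hx'B
    have hfb_le : f xb ≤ f x' := hUmin x' ⟨hx'C, hx'U⟩
    have hfx'le : f x' ≤ (fb : EReal) := by
      by_contra hcon
      push_neg at hcon
      have hev : ∀ᶠ j in atTop, (fb:EReal) < f (x (κ j)) :=
        hxκ.eventually (hlsc x' _ hcon)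
      obtain ⟨j, hj⟩ := hev.exists
      exact absurd (hj.trans_le (hfxk_le (κ j))) (lt_irrefl _)
    have hfx'ne_top : f x' ≠ ⊤ := (hfx'le.trans_lt (EReal.coe_lt_top fb)).ne
    set fs := (f x').toReal with hfsdef
    have hfscoe : (fs : EReal) = f x' := EReal.coe_toReal hfx'ne_top (hproper x')
    set n2 := ‖x' - xb‖^2 with hn2def
    have hnormto : Tendsto (fun j => ‖x (κ j) - xb‖^2) atTop (𝓝 n2) := by
      have hc : Continuous fun y : E => ‖y - xb‖^2 :=
        ((continuous_id.sub continuous_const).norm).pow 2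
      exact (hc.tendsto x').comp hxκ
    have hclaim : fs + n2 ≤ fb := by
      by_contra hcon
      push_neg at hcon
      set b := (fb - n2 + fs)/2 with hbdef
      have hb1 : b < fs := by rw [hbdef]; linarith
      have hb2 : fb - b < n2 := by rw [hbdef]; linarith
      have hblt : ((b:ℝ):EReal) < f x' := by
        rw [← hfscoe]; exact_mod_cast hb1
      have hev : ∀ᶠ j in atTop, (b:EReal) < f (x (κ j)) :=
        hxκ.eventually (hlsc x' _ hblt)
      have hev2 : ∀ᶠ j in atTop, ‖x (κ j) - xb‖^2 ≤ fb - b := by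
        filter_upwards [hev] with j hj
        have hFj : b < F (κ j) := by
          rw [← hFcoe (κ j)] at hj; exact_mod_cast hj
        have h2 := hnormle (κ j)
        linarith
      have := le_of_tendsto hnormto hev2
      linarith
    have hfble : fb ≤ fs := by
      have h : (fb:EReal) ≤ (fs:EReal) := by rw [hfbcoe, hfscoe]; exact hfb_le
      exact_mod_cast h
    have hn2le : n2 ≤ 0 := by linarith
    have : ‖x' - xb‖ = 0 := by nlinarith [norm_nonneg (x' - xb), sq_nonneg ‖x' - xb‖]
    have := norm_eq_zero.mp this
    exact sub_eq_zero.mp this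
  -- convergence of values
  have hFto : Tendsto F atTop (𝓝 fb) := by
    rw [tendsto_order]
    constructor
    · intro b hb
      have hblt : ((b:ℝ):EReal) < f xb := by rw [← hfbcoe]; exact_mod_cast hb
      have hev := hxto.eventually (hlsc xb _ hblt)
      filter_upwards [hev] with k hk
      rw [← hFcoe k] at hk; exact_mod_cast hk
    · intro b hb
      exact Eventually.of_forall fun k => lt_of_le_of_lt (hFle k) hb
  have hfto : Tendsto (fun k => f (x k)) atTop (𝓝 (f xb)) := by
    rw [← hfbcoe]
    exact (EReal.tendsto_coe.2 hFto).congr fun k => hFcoe k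
  -- projections
  have hproj : ∀ k, ∃ q ∈ C, ‖x k - q‖ = ⨅ w : C, ‖x k - w‖ := fun k =>
    exists_norm_eq_iInf_of_complete_convex ⟨xb, hxbC⟩ hCclosed.isComplete hCconv (x k)
  choose p hpC hpmin using hproj
  have hNC : ∀ k, ∀ w ∈ C, ⟪x k - p k, w - p k⟫ ≤ 0 := fun k =>
    (norm_eq_iInf_iff_real_inner_le_zero hCconv (hpC k)).1 (hpmin k)
  have hpdist : ∀ k, ‖x k - p k‖ = D (x k) := fun k => by
    have hinf : Metric.infDist (x k) C = ⨅ w : C, ‖x k - w‖ := by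
      rw [Metric.infDist_eq_iInf]
      congr 1
      funext w
      rw [dist_eq_norm]
    simp only [hDdef]
    rw [hinf]
    exact hpmin k
  have hpto : Tendsto p atTop (𝓝 xb) := by
    have h1 : Tendsto (fun k => x k - p k) atTop (𝓝 0) := by
      rw [tendsto_zero_iff_norm_tendsto_zero]
      exact hDx0.congr fun k => (hpdist k).symm
    have h2 := hxto.sub h1
    simpa using h2
  set v : ℕ → E := fun k => -(((k:ℝ)+1) • (x k - p k)) - (2:ℝ) • (x k - xb) with hvdef
  set w : ℕ → E := fun k => ((k:ℝ)+1) • (x k - p k) with hwdef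
  have hvw : ∀ k, w k = -v k - (2:ℝ) • (x k - xb) := fun k => by
    simp only [hvdef, hwdef]; abel
  -- Fréchet subgradient property
  have hfre : ∀ k, dist (x k) xb < r/2 → v k ∈ frechetSubdiff f (x k) := by
    intro k hk ε hε
    set c := ((k:ℝ)+1)/2 + 1 with hcdef
    have hc : 0 < c := by positivity
    have hδ : 0 < min (r/2) (ε/c) := lt_min (by linarith) (by positivity)
    filter_upwards [Metric.ball_mem_nhds (x k) hδ] with y hy
    rw [Metric.mem_ball] at hy
    have hy1 : dist y (x k) < r/2 := lt_of_lt_of_le hy (min_le_left _ _)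
    have hy2 : dist y (x k) < ε/c := lt_of_lt_of_le hy (min_le_right _ _)
    have hyB : y ∈ B := by
      rw [hBdef, Metric.mem_closedBall]
      calc dist y xb ≤ dist y (x k) + dist (x k) xb := dist_triangle _ _ _
      _ ≤ r := by linarith
    have hmin2 := hxmin k y hyB
    by_cases hytop : f y = ⊤
    · rw [hytop]; exact le_top
    have hyreal : (((f y).toReal : ℝ) : EReal) = f y := EReal.coe_toReal hytop (hproper y)
    set Fy := (f y).toReal with hFydef
    have hminR : F k + g k (x k) ≤ Fy + g k y := by
      simp only [hφdef] at hmin2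
      rw [← hFcoe k, ← hyreal, ← EReal.coe_add, ← EReal.coe_add,
        EReal.coe_le_coe_iff] at hmin2
      exact hmin2
    set h := y - x k with hhdef
    have hnh : ‖h‖ = dist y (x k) := by rw [hhdef, dist_eq_norm]
    have e1 : ‖y - p k‖^2 = ‖x k - p k‖^2 + 2*⟪x k - p k, h⟫ + ‖h‖^2 := by
      have he : y - p k = (x k - p k) + h := by rw [hhdef]; abel
      rw [he, norm_add_sq_real]
    have e2 : ‖y - xb‖^2 = ‖x k - xb‖^2 + 2*⟪x k - xb, h⟫ + ‖h‖^2 := by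
      have he : y - xb = (x k - xb) + h := by rw [hhdef]; abel
      rw [he, norm_add_sq_real]
    have e3 : D y ^2 ≤ ‖y - p k‖^2 := by
      have h1 : D y ≤ ‖y - p k‖ := by
        rw [← dist_eq_norm]; exact Metric.infDist_le_dist_of_mem (hpC k)
      nlinarith [hDnonneg y]
    have e4 : ⟪v k, h⟫ = -(((k:ℝ)+1) * ⟪x k - p k, h⟫) - 2*⟪x k - xb, h⟫ := by
      simp only [hvdef, inner_sub_left, inner_neg_left, real_inner_smul_left]
    have hgx : g k (x k) = ((k:ℝ)+1)/2 * ‖x k - p k‖^2 + ‖x k - xb‖^2 := by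
      simp only [hgdef]; rw [hpdist k]
    have hgy : g k y ≤ ((k:ℝ)+1)/2 * ‖y - p k‖^2 + ‖y - xb‖^2 := by
      simp only [hgdef]
      have hk05 : (0:ℝ) ≤ ((k:ℝ)+1)/2 := by positivity
      have := mul_le_mul_of_nonneg_left e3 hk05
      linarith
    have hgy' : g k y ≤ g k (x k) + (((k:ℝ)+1) * ⟪x k - p k, h⟫ + 2*⟪x k - xb, h⟫)
        + c*‖h‖^2 := by
      refine hgy.trans (le_of_eq ?_)
      rw [e1, e2, hgx, hcdef]; ring
    have hhc : c * ‖h‖^2 ≤ ε * ‖h‖ := by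
      have h0 : 0 ≤ ‖h‖ := norm_nonneg h
      have hle : ‖h‖ ≤ ε / c := by rw [hnh]; exact hy2.le
      have h1 : ‖h‖ * c ≤ ε := (le_div_iff₀ hc).mp hle
      have h2 := mul_le_mul_of_nonneg_right h1 h0
      nlinarith [h2]
    have final : F k + (⟪v k, h⟫ - ε * ‖h‖) ≤ Fy := by
      rw [e4]; linarith
    rw [← hFcoe k, ← hyreal, ← EReal.coe_add, EReal.coe_le_coe_iff]
    exact final
  have hr2 : (0:ℝ) < r/2 := by linarith
  have hNev : ∀ᶠ k in atTop, dist (x k) xb < r/2 := by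
    filter_upwards [hxto (Metric.ball_mem_nhds xb hr2)] with k hk
    exact Metric.mem_ball.mp hk
  by_cases hbdd : ∃ R, ∃ᶠ k in atTop, ‖v k‖ ≤ R
  · -- bounded case: limiting subgradient
    obtain ⟨R, hR⟩ := hbdd
    obtain ⟨σ, hσmono, hσprop⟩ := extraction_of_frequently_atTop (hR.and_eventually hNev)
    have hmem : ∀ j, v (σ j) ∈ Metric.closedBall (0:E) R := fun j => by
      rw [Metric.mem_closedBall, dist_zero_right]; exact (hσprop j).1
    obtain ⟨v', hv'B, τ, hτmono, hvτ⟩ := (isCompact_closedBall (0:E) R).tendsto_subseq hmem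
    set ρ : ℕ → ℕ := fun j => σ (τ j) with hρdef
    have hρto : Tendsto ρ atTop atTop := (hσmono.comp hτmono).tendsto_atTop
    left
    refine ⟨v', ⟨x ∘ ρ, v ∘ ρ, hxto.comp hρto, hfto.comp hρto, hvτ,
      fun j => hfre (ρ j) (hσprop (τ j)).2⟩, ?_⟩
    intro y hyC
    have hterm : ∀ j, ⟪w (ρ j), y - p (ρ j)⟫ ≤ 0 := fun j => by
      have h1 := hNC (ρ j) y hyC
      simp only [hwdef, real_inner_smul_left]
      have hk1 : (0:ℝ) ≤ (ρ j:ℝ)+1 := by positivity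
      exact mul_nonpos_of_nonneg_of_nonpos hk1 h1
    have hwto : Tendsto (fun j => w (ρ j)) atTop (𝓝 (-v')) := by
      have h1 : Tendsto (fun j => -v (ρ j)) atTop (𝓝 (-v')) := hvτ.neg
      have h2' : Tendsto (fun j => x (ρ j) - xb) atTop (𝓝 (xb - xb)) :=
        (hxto.comp hρto).sub tendsto_const_nhds
      have h2 : Tendsto (fun j => (2:ℝ) • (x (ρ j) - xb)) atTop (𝓝 (0:E)) := by
        have := h2'.const_smul (2:ℝ)
        simpa using this
      have h3 := h1.sub h2
      simp only [sub_zero] at h3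
      exact (h3.congr fun j => (hvw (ρ j)).symm)
    have hpq : Tendsto (fun j => y - p (ρ j)) atTop (𝓝 (y - xb)) :=
      tendsto_const_nhds.sub (hpto.comp hρto)
    have hlim : Tendsto (fun j => ⟪w (ρ j), y - p (ρ j)⟫) atTop (𝓝 ⟪-v', y - xb⟫) :=
      hwto.inner hpq
    exact le_of_tendsto hlim (Eventually.of_forall hterm)
  · -- unbounded case: horizon subgradient
    push_neg at hbdd
    have hvinf : Tendsto (fun k => ‖v k‖) atTop atTop := by
      rw [tendsto_atTop]
      intro b
      have h := hbdd b
      filter_upwards [h] with k hk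
      exact hk.le
    have hts0 : Tendsto (fun k => ‖v k‖⁻¹) atTop (𝓝 0) := tendsto_inv_atTop_zero.comp hvinf
    have hPev : ∀ᶠ k in atTop, 1 ≤ ‖v k‖ ∧ dist (x k) xb < r/2 :=
      (hvinf.eventually_ge_atTop 1).and hNev
    obtain ⟨σ, hσmono, hσprop⟩ := extraction_of_eventually_atTop hPev
    have hmem : ∀ j, ‖v (σ j)‖⁻¹ • v (σ j) ∈ Metric.sphere (0:E) 1 := fun j => by
      have h1 : ‖v (σ j)‖ ≠ 0 := by
        have := (hσprop j).1; intro hcon; rw [hcon] at this; linarith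
      rw [Metric.mem_sphere, dist_zero_right, norm_smul, norm_inv, norm_norm,
        inv_mul_cancel₀ h1]
    obtain ⟨v', hv'S, τ, hτmono, hvτ⟩ := (isCompact_sphere (0:E) 1).tendsto_subseq hmem
    set ρ : ℕ → ℕ := fun j => σ (τ j) with hρdef
    have hρto : Tendsto ρ atTop atTop := (hσmono.comp hτmono).tendsto_atTop
    have htspos : ∀ j, (0:ℝ) < ‖v (ρ j)‖⁻¹ := fun j => by
      have := (hσprop (τ j)).1
      have : (0:ℝ) < ‖v (ρ j)‖ := by
        calc (0:ℝ) < 1 := one_pos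
        _ ≤ ‖v (ρ j)‖ := (hσprop (τ j)).1
      exact inv_pos.2 this
    have hv'norm : ‖v'‖ = 1 := by
      rw [Metric.mem_sphere, dist_zero_right] at hv'S; exact hv'S
    right
    refine ⟨v', ⟨x ∘ ρ, v ∘ ρ, fun j => ‖v (ρ j)‖⁻¹, hxto.comp hρto, hfto.comp hρto,
      fun j => hfre (ρ j) (hσprop (τ j)).2, htspos, hts0.comp hρto, hvτ⟩, hv'norm, ?_⟩
    intro y hyC
    have hterm : ∀ j, ⟪‖v (ρ j)‖⁻¹ • w (ρ j), y - p (ρ j)⟫ ≤ 0 := fun j => by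
      rw [real_inner_smul_left]
      refine mul_nonpos_of_nonneg_of_nonpos (htspos j).le ?_
      have h1 := hNC (ρ j) y hyC
      simp only [hwdef, real_inner_smul_left]
      have hk1 : (0:ℝ) ≤ (ρ j:ℝ)+1 := by positivity
      exact mul_nonpos_of_nonneg_of_nonpos hk1 h1
    have hwto : Tendsto (fun j => ‖v (ρ j)‖⁻¹ • w (ρ j)) atTop (𝓝 (-v')) := by
      have h1 : Tendsto (fun j => -(‖v (ρ j)‖⁻¹ • v (ρ j))) atTop (𝓝 (-v')) := hvτ.neg
      have h2x' : Tendsto (fun j => x (ρ j) - xb) atTop (𝓝 (xb - xb)) :=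
        (hxto.comp hρto).sub tendsto_const_nhds
      have h2x : Tendsto (fun j => (2:ℝ) • (x (ρ j) - xb)) atTop (𝓝 (0:E)) := by
        have := h2x'.const_smul (2:ℝ)
        simpa using this
      have h2 : Tendsto (fun j => ‖v (ρ j)‖⁻¹ • ((2:ℝ) • (x (ρ j) - xb))) atTop
          (𝓝 (0:E)) := by
        have := (hts0.comp hρto).smul h2x
        simpa using this
      have h3 := h1.sub h2
      simp only [sub_zero] at h3
      refine h3.congr fun j => ?_
      simp only [hvdef, hwdef]
      module
    have hpq : Tendsto (fun j => y - p (ρ j)) atTop (𝓝 (y - xb)) :=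
      tendsto_const_nhds.sub (hpto.comp hρto)
    have hlim : Tendsto (fun j => ⟪‖v (ρ j)‖⁻¹ • w (ρ j), y - p (ρ j)⟫) atTop
        (𝓝 ⟪-v', y - xb⟫) := hwto.inner hpq
    exact le_of_tendsto hlim (Eventually.of_forall hterm)
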